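/- Let (X,d) be a compact metric space with Borel probability measure ν. Let V be a finite set of cardinality M, {Q_v}_{v ∈ V} a measurable partition of X with ν(Q_v) = 1/M for every v, each Q_v of diameter at most δ, points ι(v) ∈ Q_v, and i : X → V the map with x ∈ Q_{i(x)}. Let σ_1, …, σ_K : V → V and τ_1, …, τ_K : X → X with each τ_k Lipschitz with constant L_τ, and suppose d(τ_k(ι(v)), ι(σ_k(v))) ≤ ε for all v ∈ V and all k. Define the step-graphexon operator (G_N f)(x) = (1/K) ∑_{k=1}^K M ∫_{Q_{σ_k(i(x))}} f dν and the limit operator (G f)(x) = (1/K) ∑_{k=1}^K f(τ_k(x)). Then for every Lipschitz function f : X → ℝ with Lipschitz constant L_f, ‖G_N f − G f‖_{L²(X,ν)} ≤ L_f·((1 + L_τ)·δ + ε). -/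

import Mathlib

open MeasureTheory

/-- quantitative L² bound between the step-graphexon operator and the
limit graphexon operator on Lipschitz functions. -/
theorem stmt_4 {X : Type*} [MetricSpace X] [CompactSpace X]
    [MeasurableSpace X] [BorelSpace X]
    (ν : Measure X) [IsProbabilityMeasure ν]
    {V : Type*} [Fintype V] (M : ℕ) (hM : Fintype.card V = M)
    (K : ℕ) (hK : 0 < K)
    (Q : V → Set X)
    (hQmeas : ∀ v, MeasurableSet (Q v))
    (hQmeasure : ∀ v, ν (Q v) = 1 / (M : ENNReal))
    (hQdisj : Pairwise fun (u v : V) => Disjoint (Q u) (Q v))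
    (hQcover : (⋃ v : V, Q v) = Set.univ)
    (ι : V → X) (hι : ∀ v, ι v ∈ Q v)
    (idx : X → V) (hidx : ∀ x, x ∈ Q (idx x))
    (δ : ℝ) (hδ : ∀ v, ∀ x ∈ Q v, ∀ y ∈ Q v, dist x y ≤ δ)
    (σ : Fin K → V → V)
    (τ : Fin K → X → X) (Lτ : NNReal) (hτ : ∀ k, LipschitzWith Lτ (τ k))
    (ε : ℝ) (hε : ∀ (v : V) (k : Fin K), dist (τ k (ι v)) (ι (σ k v)) ≤ ε)
    (f : X → ℝ) (Lf : NNReal) (hf : LipschitzWith Lf f) :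
    Real.sqrt (∫ x,
        ((1 / (K : ℝ)) * ∑ k : Fin K, (M : ℝ) * ∫ y in Q (σ k (idx x)), f y ∂ν
          - (1 / (K : ℝ)) * ∑ k : Fin K, f (τ k x)) ^ 2 ∂ν)
      ≤ (Lf : ℝ) * ((1 + (Lτ : ℝ)) * δ + ε) := by
  -- Basic nonemptiness and positivity facts
  have hXne : Nonempty X := by
    by_contra h
    rw [not_nonempty_iff] at h
    have : ν Set.univ = 0 := by simp [Set.univ_eq_empty_iff.mpr h]
    simp [measure_univ] at this
  have hVne : Nonempty V := ⟨idx (Classical.arbitrary X)⟩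
  have hMpos : 0 < M := hM ▸ Fintype.card_pos
  have hMne : (M : ℝ) ≠ 0 := Nat.cast_ne_zero.mpr hMpos.ne'
  obtain ⟨v0⟩ := hVne
  have hδ0 : 0 ≤ δ := by
    have := hδ v0 (ι v0) (hι v0) (ι v0) (hι v0)
    simpa using this
  have hε0 : 0 ≤ ε := le_trans dist_nonneg (hε v0 ⟨0, hK⟩)
  set C : ℝ := (Lf : ℝ) * ((1 + (Lτ : ℝ)) * δ + ε) with hC
  have hC0 : 0 ≤ C := by positivity
  have hνQ : ∀ v, (ν (Q v)).toReal = 1 / (M : ℝ) := by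
    intro v
    rw [hQmeasure v]
    simp [ENNReal.toReal_inv]
  have hfi : Integrable f ν := by
    have := hf.continuous.continuousOn.integrableOn_compact (μ := ν) isCompact_univ
    rwa [integrableOn_univ] at this
  -- per-k pointwise bound
  have key : ∀ (x : X) (k : Fin K),
      |(M : ℝ) * (∫ y in Q (σ k (idx x)), f y ∂ν) - f (τ k x)| ≤ C := by
    intro x k
    set w := σ k (idx x)
    have hfz : ∫ y in Q w, f (τ k x) ∂ν = f (τ k x) / M := by
      rw [setIntegral_const, measureReal_def, hνQ w, smul_eq_mul]
      ring
    have hsub : (M : ℝ) * (∫ y in Q w, f y ∂ν) - f (τ k x)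
        = (M : ℝ) * (∫ y in Q w, (f y - f (τ k x)) ∂ν) := by
      rw [integral_sub (hfi.integrableOn) (integrable_const _), hfz]
      field_simp
    rw [hsub, abs_mul, abs_of_nonneg (by positivity : (0:ℝ) ≤ (M:ℝ))]
    have hbound : ∀ y ∈ Q w, ‖f y - f (τ k x)‖ ≤ C := by
      intro y hy
      have h1 : dist (f y) (f (τ k x)) ≤ (Lf : ℝ) * dist y (τ k x) := hf.dist_le_mul _ _
      have h2 : dist y (τ k x) ≤ δ + ε + (Lτ : ℝ) * δ := by
        have t1 : dist y (ι w) ≤ δ := hδ w y hy (ι w) (hι w)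
        have t2 : dist (ι w) (τ k (ι (idx x))) ≤ ε := by
          rw [dist_comm]; exact hε (idx x) k
        have t3 : dist (τ k (ι (idx x))) (τ k x) ≤ (Lτ : ℝ) * dist (ι (idx x)) x :=
          (hτ k).dist_le_mul _ _
        have t4 : dist (ι (idx x)) x ≤ δ := hδ (idx x) (ι (idx x)) (hι (idx x)) x (hidx x)
        calc dist y (τ k x) ≤ dist y (ι w) + dist (ι w) (τ k (ι (idx x)))
              + dist (τ k (ι (idx x))) (τ k x) := dist_triangle4 _ _ _ _
          _ ≤ δ + ε + (Lτ : ℝ) * δ := by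
              have : (Lτ : ℝ) * dist (ι (idx x)) x ≤ (Lτ : ℝ) * δ :=
                mul_le_mul_of_nonneg_left t4 Lτ.coe_nonneg
              linarith
      have : dist (f y) (f (τ k x)) ≤ C := by
        calc dist (f y) (f (τ k x)) ≤ (Lf : ℝ) * dist y (τ k x) := h1
          _ ≤ (Lf : ℝ) * (δ + ε + (Lτ : ℝ) * δ) :=
              mul_le_mul_of_nonneg_left h2 Lf.coe_nonneg
          _ = C := by rw [hC]; ring
      simpa [Real.dist_eq] using this
    have hint : ‖∫ y in Q w, (f y - f (τ k x)) ∂ν‖ ≤ C * (ν (Q w)).toReal :=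
      norm_setIntegral_le_of_norm_le_const (measure_lt_top ν _) hbound
    calc (M : ℝ) * |∫ y in Q w, (f y - f (τ k x)) ∂ν|
        ≤ (M : ℝ) * (C * (ν (Q w)).toReal) := by
          exact mul_le_mul_of_nonneg_left hint (by positivity)
      _ = C := by rw [hνQ w]; field_simp
  -- overall pointwise bound
  have ptw : ∀ x : X,
      |(1 / (K : ℝ)) * ∑ k : Fin K, (M : ℝ) * (∫ y in Q (σ k (idx x)), f y ∂ν)
        - (1 / (K : ℝ)) * ∑ k : Fin K, f (τ k x)| ≤ C := by
    intro x
    have h1 : (1 / (K : ℝ)) * ∑ k : Fin K, (M : ℝ) * (∫ y in Q (σ k (idx x)), f y ∂ν)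
        - (1 / (K : ℝ)) * ∑ k : Fin K, f (τ k x)
        = (1 / (K : ℝ)) * ∑ k : Fin K,
            ((M : ℝ) * (∫ y in Q (σ k (idx x)), f y ∂ν) - f (τ k x)) := by
      rw [Finset.sum_sub_distrib]; ring
    rw [h1, abs_mul]
    have hKpos : (0:ℝ) < K := Nat.cast_pos.mpr hK
    have h2 : |∑ k : Fin K, ((M : ℝ) * (∫ y in Q (σ k (idx x)), f y ∂ν) - f (τ k x))|
        ≤ (K : ℝ) * C := by
      calc |∑ k : Fin K, ((M : ℝ) * (∫ y in Q (σ k (idx x)), f y ∂ν) - f (τ k x))|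
          ≤ ∑ k : Fin K, |(M : ℝ) * (∫ y in Q (σ k (idx x)), f y ∂ν) - f (τ k x)| :=
            Finset.abs_sum_le_sum_abs _ _
        _ ≤ ∑ _k : Fin K, C := Finset.sum_le_sum fun k _ => key x k
        _ = (K : ℝ) * C := by simp [Finset.sum_const, mul_comm]
    calc |1 / (K : ℝ)| * |∑ k : Fin K, ((M : ℝ) * (∫ y in Q (σ k (idx x)), f y ∂ν) - f (τ k x))|
        ≤ (1 / (K : ℝ)) * ((K : ℝ) * C) := by
          rw [abs_of_nonneg (by positivity : (0:ℝ) ≤ 1 / (K:ℝ))]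
          exact mul_le_mul_of_nonneg_left h2 (by positivity)
      _ = C := by field_simp
  -- integrate the square
  have hsq : ∀ x : X,
      ((1 / (K : ℝ)) * ∑ k : Fin K, (M : ℝ) * (∫ y in Q (σ k (idx x)), f y ∂ν)
        - (1 / (K : ℝ)) * ∑ k : Fin K, f (τ k x)) ^ 2 ≤ C ^ 2 := by
    intro x
    have := ptw x
    rw [abs_le] at this
    exact sq_le_sq' this.1 this.2
  have hIle : (∫ x,
      ((1 / (K : ℝ)) * ∑ k : Fin K, (M : ℝ) * (∫ y in Q (σ k (idx x)), f y ∂ν)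
        - (1 / (K : ℝ)) * ∑ k : Fin K, f (τ k x)) ^ 2 ∂ν) ≤ C ^ 2 := by
    have := integral_mono_of_nonneg (μ := ν)
      (f := fun x => ((1 / (K : ℝ)) * ∑ k : Fin K, (M : ℝ) * (∫ y in Q (σ k (idx x)), f y ∂ν)
        - (1 / (K : ℝ)) * ∑ k : Fin K, f (τ k x)) ^ 2)
      (g := fun _ => C ^ 2)
      (Filter.Eventually.of_forall fun x => sq_nonneg _)
      (integrable_const _)
      (Filter.Eventually.of_forall hsq)
    simpa [integral_const, measure_univ] using this
  calc Real.sqrt (∫ x,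
        ((1 / (K : ℝ)) * ∑ k : Fin K, (M : ℝ) * ∫ y in Q (σ k (idx x)), f y ∂ν
          - (1 / (K : ℝ)) * ∑ k : Fin K, f (τ k x)) ^ 2 ∂ν)
      ≤ Real.sqrt (C ^ 2) := Real.sqrt_le_sqrt hIle
    _ = C := by rw [Real.sqrt_sq hC0]
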